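/- Let X be a real Banach space whose dual X* is isometrically isomorphic to ℓ₁, and let x ∈ S_X. Then the set ext(D(x)) of extreme points of the weak*-compact face D(x) is nonempty and at most countable, and every element of D(x) can be written as Σ_{i∈Δ} δ_i d_i* where {d_i*}_{i∈Δ} enumerates ext(D(x)), δ_i ≥ 0 for all i, Σ_{i∈Δ} δ_i = 1, and the series converges in norm in X*. -/

import Mathlib

set_option maxHeartbeats 1000000


open Filter Topology Metric
open scoped ENNReal

noncomputable section

/-- The space `ℓ₁` of absolutely summable real sequences. -/
abbrev EllOne : Type := lp (fun _ : ℕ => ℝ) 1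

/-- The subspace of `ℓ∞` consisting of convergent real sequences. -/
def convSeq : Subspace ℝ (lp (fun _ : ℕ => ℝ) ∞) where
  carrier := {f | ∃ l : ℝ, Tendsto (fun n => f n) atTop (𝓝 l)}
  add_mem' := by
    rintro f g ⟨a, ha⟩ ⟨b, hb⟩
    exact ⟨a + b, by simpa [lp.coeFn_add] using ha.add hb⟩
  zero_mem' := ⟨0, by simp [lp.coeFn_zero]⟩
  smul_mem' := by
    rintro c f ⟨a, ha⟩
    exact ⟨c * a, by simpa [lp.coeFn_smul] using ha.const_mul c⟩

/-- The Banach space `c` of convergent real sequences with the sup norm,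
realized as a subspace of `ℓ∞`. -/
abbrev SpaceC : Type := ↥convSeq

/-- A normed space is polyhedral if the unit ball of each of its
finite-dimensional subspaces is a polytope (the convex hull of finitely many points). -/
def IsPolyhedralSpace (X : Type*) [NormedAddCommGroup X] [NormedSpace ℝ X] : Prop :=
  ∀ Y : Subspace ℝ X, FiniteDimensional ℝ Y →
    ∃ F : Set Y, F.Finite ∧ closedBall (0 : Y) 1 = convexHull ℝ F

/-- The set of extreme points of the closed unit ball of the dual of `X`. -/
def extBdual (X : Type*) [NormedAddCommGroup X] [NormedSpace ℝ X] :
    Set (StrongDual ℝ X) :=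
  Set.extremePoints ℝ (closedBall (0 : StrongDual ℝ X) 1)

/-- `D(x) = {x* ∈ S_{X*} : x*(x) = 1}`. -/
def Dface {X : Type*} [NormedAddCommGroup X] [NormedSpace ℝ X] (x : X) :
    Set (StrongDual ℝ X) :=
  {f | ‖f‖ = 1 ∧ f x = 1}

namespace EllOneAux

variable (φ : EllOne →L[ℝ] ℝ)

/-- The coordinate functionals of φ. -/
def A (n : ℕ) : ℝ := φ (lp.single 1 n 1)

/-- The candidate extreme points. -/
def V (n : ℕ) : EllOne := lp.single 1 n (A φ n)

/-- The face in ℓ₁. -/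
def K : Set EllOne := {u | ‖u‖ ≤ 1 ∧ φ u = 1}

variable {φ}

lemma single_eq_smul (n : ℕ) (c : ℝ) : (lp.single 1 n c : EllOne) = c • (lp.single 1 n (1:ℝ) : EllOne) := by
  rw [← lp.single_smul]; norm_num

lemma phi_single (n : ℕ) (c : ℝ) : φ (lp.single 1 n c) = c * A φ n := by
  rw [single_eq_smul, map_smul]; rfl

lemma hasSum_abs (u : EllOne) : HasSum (fun n => |u n|) ‖u‖ := by
  have := lp.hasSum_norm (p := 1) (by norm_num) u
  simpa using this

lemma hasSum_coords (u : EllOne) : HasSum (fun n => u n * A φ n) (φ u) := by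
  have := φ.hasSum (lp.hasSum_single (by norm_num) u)
  simpa [phi_single] using this

lemma abs_A_le (hφ : ‖φ‖ ≤ 1) (n : ℕ) : |A φ n| ≤ 1 := by
  have h1 : ‖(lp.single 1 n ((fun _ : ℕ => (1:ℝ)) n) : EllOne)‖ = ‖(1:ℝ)‖ :=
    lp.norm_single (E := fun _ : ℕ => ℝ) (p := 1) (by norm_num) n ((fun _ : ℕ => (1:ℝ)) n)
  have := φ.le_opNorm (lp.single 1 n (1:ℝ))
  simp only [h1] at this
  calc |A φ n| ≤ ‖φ‖ * ‖(1:ℝ)‖ := by simpa [A] using this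
    _ ≤ 1 := by simpa using hφ

/-- Key structure lemma for elements of K. -/
lemma memK_struct (hφ : ‖φ‖ ≤ 1) {u : EllOne} (hu : u ∈ K φ) :
    (∀ n, u n * A φ n = |u n|) ∧ HasSum (fun n => |u n|) 1 := by
  obtain ⟨hn, hf⟩ := hu
  have h1 : HasSum (fun n => u n * A φ n) 1 := hf ▸ hasSum_coords u
  have h2 : HasSum (fun n => |u n|) ‖u‖ := hasSum_abs u
  have hg : ∀ n, 0 ≤ |u n| - u n * A φ n := by
    intro n
    have : u n * A φ n ≤ |u n * A φ n| := le_abs_self _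
    have h3 : |u n * A φ n| ≤ |u n| := by
      rw [abs_mul]
      calc |u n| * |A φ n| ≤ |u n| * 1 := by
            exact mul_le_mul_of_nonneg_left (abs_A_le hφ n) (abs_nonneg _)
        _ = |u n| := mul_one _
    linarith
  have hsub : HasSum (fun n => |u n| - u n * A φ n) (‖u‖ - 1) := h2.sub h1
  have hge : (0:ℝ) ≤ ‖u‖ - 1 := hasSum_le hg hasSum_zero hsub
  have hnorm : ‖u‖ = 1 := le_antisymm hn (by linarith)
  have hzero : (fun n => |u n| - u n * A φ n) = 0 := by
    rw [← hasSum_zero_iff_of_nonneg (L := SummationFilter.unconditional ℕ) hg]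
    simpa [hnorm] using hsub
  constructor
  · intro n
    have := congrFun hzero n
    simp only [Pi.zero_apply] at this
    linarith
  · simpa [hnorm] using h2

lemma abs_A_eq_one_of_ne (hφ : ‖φ‖ ≤ 1) {u : EllOne} (hu : u ∈ K φ) {n : ℕ}
    (hn : u n ≠ 0) : |A φ n| = 1 := by
  have h := (memK_struct hφ hu).1 n
  have h2 : |u n| ≤ |u n| * |A φ n| := by
    calc |u n| = u n * A φ n := h.symm
      _ ≤ |u n * A φ n| := le_abs_self _
      _ = |u n| * |A φ n| := abs_mul _ _
  have hpos : 0 < |u n| := abs_pos.mpr hn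
  have : 1 ≤ |A φ n| := by
    by_contra hlt
    push_neg at hlt
    nlinarith
  linarith [abs_A_le hφ n]

lemma abs_smul_A (hφ : ‖φ‖ ≤ 1) {u : EllOne} (hu : u ∈ K φ) (n : ℕ) :
    |u n| * A φ n = u n := by
  by_cases hn : u n = 0
  · simp [hn]
  · have h := (memK_struct hφ hu).1 n
    have ha : |A φ n| = 1 := abs_A_eq_one_of_ne hφ hu hn
    have ha2 : A φ n * A φ n = 1 := by
      have := sq_abs (A φ n)
      rw [ha] at this
      nlinarith
    calc |u n| * A φ n = (u n * A φ n) * A φ n := by rw [h]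
      _ = u n * (A φ n * A φ n) := by ring
      _ = u n := by rw [ha2]; ring

lemma V_memK (hφ : ‖φ‖ ≤ 1) {n : ℕ} (ha : |A φ n| = 1) : V φ n ∈ K φ := by
  have ha2 : A φ n * A φ n = 1 := by
    have := sq_abs (A φ n); rw [ha] at this; nlinarith
  constructor
  · have : ‖(lp.single 1 n ((fun _ : ℕ => A φ n) n) : EllOne)‖ = ‖A φ n‖ :=
      lp.norm_single (E := fun _ : ℕ => ℝ) (p := 1) (by norm_num) n ((fun _ : ℕ => A φ n) n)
    simp only [V]
    rw [this, Real.norm_eq_abs, ha]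
  · rw [V, phi_single, ha2]


lemma A_sq {n : ℕ} (ha : |A φ n| = 1) : A φ n * A φ n = 1 := by
  have := sq_abs (A φ n); rw [ha] at this; nlinarith

lemma abs_coord_le_one (hφ : ‖φ‖ ≤ 1) {u : EllOne} (hu : u ∈ K φ) (n : ℕ) :
    |u n| ≤ 1 :=
  le_hasSum (memK_struct hφ hu).2 n (fun _ _ => abs_nonneg _)

lemma coord_zero_of_ne (hφ : ‖φ‖ ≤ 1) {u : EllOne} (hu : u ∈ K φ) {n : ℕ}
    (h1 : |u n| = 1) {m : ℕ} (hm : m ≠ n) : u m = 0 := by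
  classical
  have hs := (memK_struct hφ hu).2
  have hupd : HasSum (Function.update (fun m => |u m|) n 0) (0 - |u n| + 1) :=
    hs.update n 0
  rw [h1] at hupd
  have h0 : HasSum (Function.update (fun m => |u m|) n 0) 0 := by
    simpa using hupd
  have hz := (hasSum_zero_iff_of_nonneg ?_).mp h0
  · have := congrFun hz m
    rw [Function.update_apply, if_neg hm] at this
    simpa using this
  · intro m
    rw [Function.update_apply]
    split <;> simp [abs_nonneg]

lemma eq_V_of_abs_eq_one (hφ : ‖φ‖ ≤ 1) {u : EllOne} (hu : u ∈ K φ) {n : ℕ}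
    (h1 : |u n| = 1) : u = V φ n := by
  have hA : u n = A φ n := by
    have := abs_smul_A hφ hu n
    rw [h1, one_mul] at this
    exact this.symm
  refine lp.ext (funext fun m => ?_)
  by_cases hm : m = n
  · subst hm
    rw [hA]
    exact (lp.single_apply_self (E := fun _ : ℕ => ℝ) 1 m (A φ m)).symm
  · rw [coord_zero_of_ne hφ hu h1 hm]
    exact (lp.single_apply_ne (E := fun _ : ℕ => ℝ) 1 n (A φ n) hm).symm

lemma V_apply_self (n : ℕ) : (V φ n : ℕ → ℝ) n = A φ n :=
  lp.single_apply_self (E := fun _ : ℕ => ℝ) 1 n (A φ n)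

lemma V_apply_ne {n m : ℕ} (hm : m ≠ n) : (V φ n : ℕ → ℝ) m = 0 :=
  lp.single_apply_ne (E := fun _ : ℕ => ℝ) 1 n (A φ n) hm

lemma coord_add_smul (t s : ℝ) (y z : EllOne) (m : ℕ) :
    (t • y + s • z : EllOne) m = t * y m + s * z m := by
  rw [lp.coeFn_add, lp.coeFn_smul, lp.coeFn_smul]; rfl

lemma V_extreme (hφ : ‖φ‖ ≤ 1) {n : ℕ} (ha : |A φ n| = 1) :
    V φ n ∈ Set.extremePoints ℝ (K φ) := by
  refine ⟨V_memK hφ ha, fun y hy z hz hseg => ?_⟩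
  obtain ⟨t, s, ht, hs, hts, heq⟩ := hseg
  have hcoord : t * y n + s * z n = A φ n := by
    rw [← V_apply_self (φ := φ) n, ← heq, ← coord_add_smul]
  have hy1 : y n * A φ n = |y n| := (memK_struct hφ hy).1 n
  have hz1 : z n * A φ n = |z n| := (memK_struct hφ hz).1 n
  have hmul : t * |y n| + s * |z n| = 1 := by
    have := congrArg (fun r => r * A φ n) hcoord
    simp only [add_mul, mul_assoc] at this
    rw [hy1, hz1, A_sq ha] at this
    linarith [this]
  have hyle := abs_coord_le_one hφ hy n
  have hzle := abs_coord_le_one hφ hz n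
  have hy2 : |y n| = 1 := by nlinarith
  have hz2 : |z n| = 1 := by nlinarith
  exact eq_V_of_abs_eq_one hφ hy hy2


lemma hasSum_repr (hφ : ‖φ‖ ≤ 1) {u : EllOne} (hu : u ∈ K φ) :
    HasSum (fun n => |u n| • V φ n) u := by
  have h := lp.hasSum_single (p := 1) (by norm_num) u
  have he : ∀ n, |u n| • V φ n = lp.single 1 n (u n) := by
    intro n
    rw [V, ← lp.single_smul, smul_eq_mul, abs_smul_A hφ hu n]
  simpa [he] using h

lemma exists_nonzero_coord (hφ : ‖φ‖ ≤ 1) {u : EllOne} (hu : u ∈ K φ) :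
    ∃ n, u n ≠ 0 := by
  by_contra h
  push_neg at h
  have := (memK_struct hφ hu).2
  have h0 : HasSum (fun n : ℕ => |u n|) 0 := by
    convert hasSum_zero with n
    simp [h n]
  exact one_ne_zero (α := ℝ) (this.unique h0)

lemma norm_sub_single (hφ : ‖φ‖ ≤ 1) {u : EllOne} (hu : u ∈ K φ) (n : ℕ) :
    ‖u - lp.single 1 n (u n)‖ = 1 - |u n| := by
  classical
  set y : EllOne := u - lp.single 1 n (u n) with hy
  have hyc : ∀ m, (y : ℕ → ℝ) m = Function.update (fun m => u m) n 0 m := by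
    intro m
    rw [Function.update_apply]
    by_cases hm : m = n
    · subst hm
      simp [hy, lp.coeFn_sub, lp.single_apply_self (E := fun _ : ℕ => ℝ) 1 m (u m)]
    · simp [hy, lp.coeFn_sub, lp.single_apply_ne (E := fun _ : ℕ => ℝ) 1 n (u n) hm, hm]
  have habs : (fun m => |y m|) = Function.update (fun m => |u m|) n 0 := by
    funext m
    rw [hyc m, Function.update_apply, Function.update_apply]
    split <;> simp
  have hs : HasSum (fun m => |y m|) (1 - |u n|) := by
    rw [habs]
    have := ((memK_struct hφ hu).2).update n 0
    convert this using 1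
    · rfl
    ring
  exact (hasSum_abs y).unique hs

lemma extreme_sub (hφ : ‖φ‖ ≤ 1) {u : EllOne}
    (hu : u ∈ Set.extremePoints ℝ (K φ)) :
    ∃ n, |A φ n| = 1 ∧ u = V φ n := by
  obtain ⟨huK, hext⟩ := hu
  obtain ⟨n, hn⟩ := exists_nonzero_coord hφ huK
  have haA : |A φ n| = 1 := abs_A_eq_one_of_ne hφ huK hn
  refine ⟨n, haA, ?_⟩
  rcases eq_or_lt_of_le (abs_coord_le_one hφ huK n) with h1 | hlt
  · exact eq_V_of_abs_eq_one hφ huK h1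
  · -- derive a contradiction from extremality
    exfalso
    have ht0 : 0 < |u n| := abs_pos.mpr hn
    have hne : (1 - |u n|) ≠ 0 := by linarith
    have hwK : (1 - |u n|)⁻¹ • (u - lp.single 1 n (u n)) ∈ K φ := by
      constructor
      · rw [norm_smul, norm_sub_single hφ huK n, Real.norm_eq_abs,
          abs_of_pos (inv_pos.mpr (by linarith))]
        rw [inv_mul_cancel₀ hne]
      · rw [map_smul, map_sub, phi_single, (memK_struct hφ huK).1 n, huK.2]
        simp only [smul_eq_mul]
        field_simp
    have hVK : V φ n ∈ K φ := V_memK hφ haA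
    have hseg : u ∈ openSegment ℝ (V φ n) ((1 - |u n|)⁻¹ • (u - lp.single 1 n (u n))) := by
      refine ⟨|u n|, 1 - |u n|, ht0, by linarith, by ring, ?_⟩
      have h1 : (1 - |u n|) • ((1 - |u n|)⁻¹ • (u - lp.single 1 n (u n)))
          = u - lp.single 1 n (u n) := by
        rw [smul_smul, mul_inv_cancel₀ hne, one_smul]
      have h2 : |u n| • V φ n = lp.single 1 n (u n) := by
        rw [V, ← lp.single_smul, smul_eq_mul, abs_smul_A hφ huK n]
      rw [h1, h2]
      abel
    have hVu := hext hVK hwK hseg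
    have hun : u n = A φ n := by
      rw [← hVu]
      exact V_apply_self (φ := φ) n
    rw [hun, haA] at hlt
    exact lt_irrefl _ hlt


lemma V_ne_zero {n : ℕ} (h : A φ n ≠ 0) : V φ n ≠ 0 := by
  intro h0
  apply h
  rw [← V_apply_self (φ := φ) n, h0]
  simp [lp.coeFn_zero]

lemma V_inj {n m : ℕ} (ham : A φ m ≠ 0) (h : V φ n = V φ m) : n = m := by
  by_contra hnm
  have h1 : (V φ n : ℕ → ℝ) m = 0 := V_apply_ne (Ne.symm hnm)
  have h2 : (V φ m : ℕ → ℝ) m = A φ m := V_apply_self m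
  rw [h] at h1
  rw [h2] at h1
  exact ham h1


end EllOneAux

section Transfer
variable {Y Z : Type*} [NormedAddCommGroup Y] [NormedSpace ℝ Y]
  [NormedAddCommGroup Z] [NormedSpace ℝ Z]

lemma openSegment_image_iff (L : Y ≃ₗᵢ[ℝ] Z) {a b u : Y} :
    L u ∈ openSegment ℝ (L a) (L b) ↔ u ∈ openSegment ℝ a b := by
  constructor
  · rintro ⟨t, s, ht, hs, hts, h⟩
    refine ⟨t, s, ht, hs, hts, ?_⟩
    have := congrArg L.symm h
    simpa [map_add, map_smul] using this
  · rintro ⟨t, s, ht, hs, hts, h⟩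
    exact ⟨t, s, ht, hs, hts, by rw [← h]; simp [map_add, map_smul]⟩

lemma extremePoints_image (L : Y ≃ₗᵢ[ℝ] Z) (s : Set Y) :
    Set.extremePoints ℝ (L '' s) = L '' Set.extremePoints ℝ s := by
  ext z
  constructor
  · rintro ⟨⟨y, hy, rfl⟩, h2⟩
    refine ⟨y, ⟨hy, fun y₁ hy₁ y₂ hy₂ hseg => ?_⟩, rfl⟩
    have := h2 ⟨y₁, hy₁, rfl⟩ ⟨y₂, hy₂, rfl⟩
      ((openSegment_image_iff L).mpr hseg)
    exact L.injective this
  · rintro ⟨y, ⟨hy, h2⟩, rfl⟩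
    refine ⟨⟨y, hy, rfl⟩, ?_⟩
    rintro z₁ ⟨y₁, hy₁, rfl⟩ z₂ ⟨y₂, hy₂, rfl⟩ hseg
    have := h2 hy₁ hy₂ ((openSegment_image_iff L).mp hseg)
    exact congrArg L this

end Transfer

open EllOneAux in
/-- For a predual `X` of `ℓ₁` and `x ∈ S_X`, the set of extreme points of the face
`D(x)` is nonempty and at most countable, and every element of `D(x)` is a norm-convergent
convex series `Σ δ_i d_i*` of these extreme points. -/
theorem Dface_extremePoints_structure
    {X : Type} [NormedAddCommGroup X] [NormedSpace ℝ X] [CompleteSpace X]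
    (hdual : Nonempty (StrongDual ℝ X ≃ₗᵢ[ℝ] EllOne))
    (x : X) (hx : ‖x‖ = 1) :
    (Set.extremePoints ℝ (Dface x)).Nonempty ∧
    (Set.extremePoints ℝ (Dface x)).Countable ∧
    ∀ f ∈ Dface x, ∃ δ : (Set.extremePoints ℝ (Dface x)) → ℝ,
      (∀ i, 0 ≤ δ i) ∧ HasSum δ 1 ∧
      HasSum (fun i : (Set.extremePoints ℝ (Dface x)) =>
        δ i • (i : StrongDual ℝ X)) f := by
  classical
  obtain ⟨e⟩ := hdual
  set φ : EllOne →L[ℝ] ℝ :=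
    (NormedSpace.inclusionInDoubleDual ℝ X x).comp
      e.symm.toLinearIsometry.toContinuousLinearMap with hφdef
  have hφapp : ∀ u : EllOne, φ u = e.symm u x := fun u => rfl
  have hφ : ‖φ‖ ≤ 1 := by
    refine ContinuousLinearMap.opNorm_le_bound _ zero_le_one fun u => ?_
    rw [hφapp, Real.norm_eq_abs, one_mul]
    calc |e.symm u x| ≤ ‖e.symm u‖ * ‖x‖ := (e.symm u).le_opNorm x
      _ = ‖u‖ := by rw [hx, mul_one, e.symm.norm_map]
  -- D(x) is the image of K under e.symm
  have hD : Dface x = e.symm '' K φ := by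
    ext f
    constructor
    · intro hf
      refine ⟨e f, ⟨?_, ?_⟩, e.symm_apply_apply f⟩
      · rw [e.norm_map, hf.1]
      · rw [hφapp, e.symm_apply_apply]; exact hf.2
    · rintro ⟨u, ⟨hu1, hu2⟩, rfl⟩
      rw [hφapp] at hu2
      have h1 : (1:ℝ) ≤ ‖e.symm u‖ := by
        calc (1:ℝ) = e.symm u x := hu2.symm
          _ ≤ |e.symm u x| := le_abs_self _
          _ ≤ ‖e.symm u‖ * ‖x‖ := (e.symm u).le_opNorm x
          _ = ‖e.symm u‖ := by rw [hx, mul_one]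
      have h2 : ‖e.symm u‖ = 1 := le_antisymm (by rw [e.symm.norm_map]; exact hu1) h1
      exact ⟨h2, hu2⟩
  have hext : Set.extremePoints ℝ (Dface x) = e.symm '' Set.extremePoints ℝ (K φ) := by
    rw [hD, extremePoints_image]
  -- membership of extreme points in K-image
  have hmem : ∀ i : (Set.extremePoints ℝ (Dface x)),
      e (↑i) ∈ Set.extremePoints ℝ (K φ) := by
    rintro ⟨f, hf⟩
    rw [hext] at hf
    obtain ⟨w, hw, hwe⟩ := hf
    have : w = e f := by rw [← hwe, e.apply_symm_apply]
    exact this ▸ hw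
  have hmm : ∀ {n : ℕ}, |A φ n| = 1 →
      e.symm (V φ n) ∈ Set.extremePoints ℝ (Dface x) := by
    intro n hn
    rw [hext]
    exact ⟨V φ n, V_extreme hφ hn, rfl⟩
  refine ⟨?_, ?_, ?_⟩
  · -- Nonempty
    have hxne : x ≠ 0 := fun h => by simp [h] at hx
    obtain ⟨g, hg1, hg2⟩ := exists_dual_vector ℝ x (norm_ne_zero_iff.mpr hxne)
    have hgD : g ∈ Dface x := ⟨hg1, by rw [hg2, hx]; norm_num⟩
    have hgK : e g ∈ K φ := by
      rw [hD] at hgD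
      obtain ⟨u, hu, hue⟩ := hgD
      have : u = e g := by rw [← hue, e.apply_symm_apply]
      exact this ▸ hu
    obtain ⟨n, hn⟩ := exists_nonzero_coord hφ hgK
    exact ⟨e.symm (V φ n), hmm (abs_A_eq_one_of_ne hφ hgK hn)⟩
  · -- Countable
    rw [hext]
    refine Set.Countable.image ?_ _
    refine Set.Countable.mono ?_ (Set.countable_range (V φ))
    intro w hw
    obtain ⟨n, _, hn⟩ := extreme_sub hφ hw
    exact ⟨n, hn.symm⟩
  · -- Representation
    intro f hf
    have huK : e f ∈ K φ := by
      rw [hD] at hf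
      obtain ⟨u, hu, hue⟩ := hf
      have : u = e f := by rw [← hue, e.apply_symm_apply]
      exact this ▸ hu
    set u : EllOne := e f with hu
    choose N hN1 hN2 using fun i : (Set.extremePoints ℝ (Dface x)) =>
      extreme_sub hφ (hmem i)
    refine ⟨fun i => |u (N i)|, fun i => abs_nonneg _, ?_, ?_⟩
    · -- HasSum δ 1
      have base : HasSum (fun n => |u n|) 1 := (memK_struct hφ huK).2
      rw [hasSum_iff_hasSum_of_ne_zero_bij
        (i := fun p : Function.support (fun n : ℕ => |u n|) =>
          (⟨e.symm (V φ (↑p)), hmm (abs_A_eq_one_of_ne hφ huK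
            (fun h0 => p.2 (by simp [h0])))⟩ :
            (Set.extremePoints ℝ (Dface x))))
        ?_ ?_ ?_]
      · exact base
      · rintro p q hpq
        have h1 : V φ (↑p) = V φ (↑q) := e.symm.injective (by
          simpa using congrArg Subtype.val hpq)
        have haq : A φ (↑q : ℕ) ≠ 0 := by
          have := abs_A_eq_one_of_ne hφ huK
            (fun h0 : (u : ℕ → ℝ) (↑q : ℕ) = 0 => q.2 (by simp [h0]))
          intro h0; rw [h0] at this; simp at this
        exact Subtype.ext (V_inj haq h1)
      · rintro i hi
        have hNi : (N i) ∈ Function.support (fun n : ℕ => |u n|) := by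
          simpa using hi
        refine ⟨⟨N i, hNi⟩, ?_⟩
        apply Subtype.ext
        show e.symm (V φ (N i)) = ↑i
        rw [← hN2 i, e.symm_apply_apply]
      · rintro ⟨p, hp⟩
        have hup : u p ≠ 0 := fun h0 => hp (by simp [h0])
        have hap : |A φ p| = 1 := abs_A_eq_one_of_ne hφ huK hup
        have hNp : N (⟨e.symm (V φ p), hmm hap⟩ :
            (Set.extremePoints ℝ (Dface x))) = p := by
          have h2 := hN2 (⟨e.symm (V φ p), hmm hap⟩ :
            (Set.extremePoints ℝ (Dface x)))
          rw [e.apply_symm_apply] at h2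
          exact (V_inj (fun h0 => by rw [h0] at hap; simp at hap) h2.symm)
        simp only [hNp]
    · -- HasSum (δ i • i) f
      have base2 : HasSum (fun n => |u n| • V φ n) u := hasSum_repr hφ huK
      have step : HasSum (fun i : (Set.extremePoints ℝ (Dface x)) =>
          |u (N i)| • (e ↑i : EllOne)) u := by
        rw [hasSum_iff_hasSum_of_ne_zero_bij
          (i := fun p : Function.support (fun n : ℕ => |u n| • V φ n) =>
            (⟨e.symm (V φ (↑p)), hmm (abs_A_eq_one_of_ne hφ huK
              (fun h0 => p.2 (by simp [h0])))⟩ :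
              (Set.extremePoints ℝ (Dface x))))
          ?_ ?_ ?_]
        · exact base2
        · rintro p q hpq
          have h1 : V φ (↑p) = V φ (↑q) := e.symm.injective (by
            simpa using congrArg Subtype.val hpq)
          have haq : A φ (↑q : ℕ) ≠ 0 := by
            have := abs_A_eq_one_of_ne hφ huK
              (fun h0 : (u : ℕ → ℝ) (↑q : ℕ) = 0 => q.2 (by simp [h0]))
            intro h0; rw [h0] at this; simp at this
          exact Subtype.ext (V_inj haq h1)
        · rintro i hi
          have hui : u (N i) ≠ 0 := by
            intro h0
            apply hi
            simp only [Function.mem_support, ne_eq, not_not] at *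
            simp [h0]
          have hNi : (N i) ∈ Function.support (fun n : ℕ => |u n| • V φ n) := by
            simp only [Function.mem_support, ne_eq]
            exact smul_ne_zero (abs_ne_zero.mpr hui)
              (V_ne_zero (fun h0 => by
                have := hN1 i; rw [h0] at this; simp at this))
          refine ⟨⟨N i, hNi⟩, ?_⟩
          apply Subtype.ext
          show e.symm (V φ (N i)) = ↑i
          rw [← hN2 i, e.symm_apply_apply]
        · rintro ⟨p, hp⟩
          have hup : u p ≠ 0 := by
            intro h0
            apply hp
            simp [h0]
          have hap : |A φ p| = 1 := abs_A_eq_one_of_ne hφ huK hup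
          have hNp : N (⟨e.symm (V φ p), hmm hap⟩ :
              (Set.extremePoints ℝ (Dface x))) = p := by
            have h2 := hN2 (⟨e.symm (V φ p), hmm hap⟩ :
              (Set.extremePoints ℝ (Dface x)))
            rw [e.apply_symm_apply] at h2
            exact (V_inj (fun h0 => by rw [h0] at hap; simp at hap) h2.symm)
          simp only [hNp]
          rw [e.apply_symm_apply]
      have final := e.symm.toLinearIsometry.toContinuousLinearMap.hasSum step
      have : ∀ i : (Set.extremePoints ℝ (Dface x)),
          e.symm.toLinearIsometry.toContinuousLinearMap (|u (N i)| • (e ↑i : EllOne))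
            = |u (N i)| • (↑i : StrongDual ℝ X) := by
        intro i
        rw [map_smul]
        congr 1
        exact e.symm_apply_apply ↑i
      rw [funext this] at final
      have hf2 : e.symm.toLinearIsometry.toContinuousLinearMap u = f := by
        rw [hu]
        exact e.symm_apply_apply f
      rwa [hf2] at final

end
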